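/- arXiv:2303.00211 — 4 statements merged into one kernel-verified Lean document; each statement's English description precedes it below -/
import Mathlib

section
/- Let L > 0 and T ≥ 1 be an integer. For k ≥ 1 set α_k = 2/(k+1), let Γ_1 = 1 and Γ_k = (1−α_k)Γ_{k−1} for k ≥ 2, set λ = 1/(2L), and let γ_k ∈ [λ, (1+α_k/4)λ] for each k. Then for every 1 ≤ k ≤ T, the quantity C_k := 1 − Lγ_k − (L(γ_k−λ)²/(2 α_k Γ_k γ_k)) · ∑_{τ=k}^{T} Γ_τ satisfies C_k ≥ 11/32. -/
open Finset

/-- With `L > 0`, `T ≥ 1`, `αₖ = 2/(k+1)`, `Γ₁ = 1`, `Γₖ = (1−αₖ)Γ_{k−1}` for `k ≥ 2`,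
`λ = 1/(2L)` and `γₖ ∈ [λ, (1+αₖ/4)λ]`, the quantity
`Cₖ = 1 − Lγₖ − (L(γₖ−λ)²/(2αₖΓₖγₖ))·∑_{τ=k}^{T} Γτ` satisfies `Cₖ ≥ 11/32`
for every `1 ≤ k ≤ T`. -/
theorem stmt3 (L : ℝ) (hL : 0 < L) (T : ℕ) (hT : 1 ≤ T)
    (α Γ γ : ℕ → ℝ) (lam : ℝ)
    (hα : ∀ k : ℕ, 1 ≤ k → α k = 2 / ((k : ℝ) + 1))
    (hΓ1 : Γ 1 = 1) (hΓ : ∀ k : ℕ, 2 ≤ k → Γ k = (1 - α k) * Γ (k - 1))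
    (hlam : lam = 1 / (2 * L))
    (hγ : ∀ k, γ k ∈ Set.Icc lam ((1 + α k / 4) * lam)) :
    ∀ k : ℕ, 1 ≤ k → k ≤ T →
      (11 : ℝ) / 32 ≤
        1 - L * γ k -
          L * (γ k - lam) ^ 2 / (2 * α k * Γ k * γ k) * ∑ τ ∈ Finset.Icc k T, Γ τ := by
  subst hlam
  -- closed form for Γ
  have hΓeq : ∀ k : ℕ, 1 ≤ k → Γ k = 2 / ((k : ℝ) * ((k : ℝ) + 1)) := by
    intro k hk
    induction k with
    | zero => omega
    | succ m ih =>
      rcases Nat.eq_or_lt_of_le hk with h | h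
      · simp [← h, hΓ1]; norm_num
      · have hm : 1 ≤ m := by omega
        have h2 : 2 ≤ m + 1 := by omega
        rw [hΓ _ h2, hα _ (by omega)]
        simp only [Nat.add_sub_cancel]
        rw [ih hm]
        have hm0 : (0:ℝ) < m := by exact_mod_cast hm
        push_cast
        field_simp
        ring
  -- telescoping sum
  have hsum : ∀ k : ℕ, 1 ≤ k → ∀ N : ℕ, k ≤ N →
      ∑ τ ∈ Finset.Icc k N, Γ τ = 2 / (k : ℝ) - 2 / ((N : ℝ) + 1) := by
    intro k hk N hN
    induction N, hN using Nat.le_induction with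
    | base =>
      rw [Finset.Icc_self, Finset.sum_singleton, hΓeq k hk]
      have hk0 : (0:ℝ) < k := by exact_mod_cast hk
      field_simp
      ring
    | succ n hn ih =>
      rw [Finset.sum_Icc_succ_top (by omega), ih, hΓeq (n+1) (by omega)]
      push_cast
      have h1 : (0:ℝ) < (n:ℝ) + 1 := by positivity
      have h2 : (0:ℝ) < (n:ℝ) + 2 := by positivity
      field_simp
      ring
  intro k hk hkT
  have hn : (1:ℝ) ≤ (k:ℝ) := by exact_mod_cast hk
  have hn0 : (0:ℝ) < (k:ℝ) := by linarith
  have hn1 : (0:ℝ) < (k:ℝ) + 1 := by linarith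
  have hlam0 : (0:ℝ) < 1 / (2 * L) := by positivity
  obtain ⟨hγl, hγu⟩ := hγ k
  rw [hα k hk] at hγu ⊢
  rw [hΓeq k hk, hsum k hk T hkT]
  set x := γ k with hxdef
  have hx0 : 0 < x := lt_of_lt_of_le hlam0 hγl
  -- bound on the sum
  have hT1 : (k:ℝ) ≤ (T:ℝ) := by exact_mod_cast hkT
  have hS_ub : 2 / (k:ℝ) - 2 / ((T:ℝ)+1) ≤ 2 / (k:ℝ) := by
    have h0 : (0:ℝ) ≤ 2 / ((T:ℝ)+1) := by positivity
    linarith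
  have hS_nn : 0 ≤ 2 / (k:ℝ) - 2 / ((T:ℝ)+1) := by
    have h2 : 2 / ((T:ℝ)+1) ≤ 2 / (k:ℝ) := by
      apply div_le_div_of_nonneg_left (by norm_num) hn0
      linarith
    linarith
  -- L * x ≤ 5/8
  have hα1 : 2 / ((k:ℝ) + 1) ≤ 1 := by
    rw [div_le_one hn1]; linarith
  have hLγ : L * x ≤ 5 / 8 := by
    have hxle : x ≤ (1 + 1/4) * (1/(2*L)) := by
      calc x ≤ (1 + 2/((k:ℝ)+1)/4) * (1/(2*L)) := hγu
        _ ≤ (1 + 1/4) * (1/(2*L)) := by nlinarith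
    calc L * x ≤ L * ((1+1/4)*(1/(2*L))) := by
          exact mul_le_mul_of_nonneg_left hxle hL.le
      _ = 5/8 := by field_simp; ring
  -- bound the error term
  have hxu : x - 1/(2*L) ≤ (1/(2*L)) / (2 * ((k:ℝ)+1)) := by
    have h : (1 + 2/((k:ℝ)+1)/4) * (1/(2*L)) = 1/(2*L) + (1/(2*L)) / (2*((k:ℝ)+1)) := by
      field_simp
      ring
    linarith [h ▸ hγu]
  have hx_nn : (0:ℝ) ≤ x - 1/(2*L) := by linarith
  have hD : (0:ℝ) < 2 * (2 / ((k:ℝ)+1)) * (2 / ((k:ℝ) * ((k:ℝ)+1))) * x := by positivity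
  have hE : L * (x - 1/(2*L)) ^ 2 / (2 * (2 / ((k:ℝ)+1)) * (2 / ((k:ℝ) * ((k:ℝ)+1))) * x) *
      (2 / (k:ℝ) - 2 / ((T:ℝ)+1)) ≤ 1 / 32 := by
    rw [div_mul_eq_mul_div, div_le_iff₀ hD]
    have hnum : L * (x - 1/(2*L)) ^ 2 ≤ L * ((1/(2*L)) / (2*((k:ℝ)+1)))^2 := by
      apply mul_le_mul_of_nonneg_left _ hL.le
      exact pow_le_pow_left₀ hx_nn hxu 2
    calc L * (x - 1/(2*L)) ^ 2 * (2 / (k:ℝ) - 2 / ((T:ℝ)+1))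
        ≤ L * ((1/(2*L)) / (2*((k:ℝ)+1)))^2 * (2 / (k:ℝ)) :=
          mul_le_mul hnum hS_ub hS_nn (by positivity)
      _ = 1 / (8 * L * (k:ℝ) * ((k:ℝ)+1)^2) := by field_simp; ring
      _ ≤ 1/32 * (2 * (2 / ((k:ℝ)+1)) * (2 / ((k:ℝ) * ((k:ℝ)+1))) * x) := by
          have hrhs : 1/32 * (2 * (2 / ((k:ℝ)+1)) * (2 / ((k:ℝ) * ((k:ℝ)+1))) * x)
              = x / (4 * (k:ℝ) * ((k:ℝ)+1)^2) := by field_simp; ring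
          rw [hrhs, div_le_div_iff₀ (by positivity) (by positivity)]
          have h2Lx : 1 ≤ x * (2 * L) := (div_le_iff₀ (by positivity)).mp hγl
          nlinarith [mul_le_mul_of_nonneg_right h2Lx
            (mul_pos hn0 (mul_pos hn1 hn1)).le]
  linarith [hE]
end

section
/- Let α_0 = 1 and α_k ∈ (0,1) for k ≥ 1, Γ_0 = 1 and Γ_k = (1−α_k)Γ_{k−1} for k ≥ 1. Let (γ_k), (λ_k) be real sequences, (g_k) ⊂ ℝ^n, and suppose (d_k) ⊂ ℝ^n satisfies d_{k+1} = (1−α_k) d_k + (γ_k − λ_k) g_k for all k ≥ 0, with d_0 ∈ ℝ^n arbitrary. Then for every k ≥ 0, ‖d_{k+1}‖² ≤ Γ_k ∑_{τ=0}^{k} ((γ_τ − λ_τ)²/(Γ_τ α_τ)) ‖g_τ‖². -/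
open Finset

lemma conv_sq_bound {n : ℕ} (a c : ℝ) (ha : 0 < a) (ha1 : a < 1)
    (x y : EuclideanSpace ℝ (Fin n)) :
    ‖(1 - a) • x + c • y‖ ^ 2 ≤ (1 - a) * ‖x‖ ^ 2 + c ^ 2 / a * ‖y‖ ^ 2 := by
  have h1 : ‖(1 - a) • x + c • y‖ ≤ (1 - a) * ‖x‖ + |c| * ‖y‖ := by
    calc ‖(1 - a) • x + c • y‖ ≤ ‖(1 - a) • x‖ + ‖c • y‖ := norm_add_le _ _
    _ = (1 - a) * ‖x‖ + |c| * ‖y‖ := by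
        rw [norm_smul, norm_smul, Real.norm_eq_abs, Real.norm_eq_abs,
          abs_of_nonneg (by linarith : (0:ℝ) ≤ 1 - a)]
  have hn : (0:ℝ) ≤ ‖(1 - a) • x + c • y‖ := norm_nonneg _
  have h2 : ‖(1 - a) • x + c • y‖ ^ 2 ≤ ((1 - a) * ‖x‖ + |c| * ‖y‖) ^ 2 := by
    nlinarith [h1, hn]
  have hc : |c| ^ 2 = c ^ 2 := sq_abs c
  have key : ((1 - a) * ‖x‖ + |c| * ‖y‖) ^ 2 ≤ (1 - a) * ‖x‖ ^ 2 + c ^ 2 / a * ‖y‖ ^ 2 := by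
    have h3 : 0 ≤ (1 - a) / a * (a * ‖x‖ - |c| * ‖y‖) ^ 2 :=
      mul_nonneg (div_nonneg (by linarith) ha.le) (sq_nonneg _)
    have ha' : a ≠ 0 := ne_of_gt ha
    have hid : (1 - a) * ‖x‖ ^ 2 + c ^ 2 / a * ‖y‖ ^ 2 - ((1 - a) * ‖x‖ + |c| * ‖y‖) ^ 2
        = (1 - a) / a * (a * ‖x‖ - |c| * ‖y‖) ^ 2 := by
      field_simp; rw [← hc]; ring
    linarith
  linarith

/-- If `α₀ = 1`, `αₖ ∈ (0,1)` for `k ≥ 1`, `Γ₀ = 1`, `Γₖ = (1−αₖ)Γ_{k−1}` for `k ≥ 1`,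
and `d_{k+1} = (1−αₖ)dₖ + (γₖ−λₖ)gₖ`, then
`‖d_{k+1}‖² ≤ Γₖ ∑_{τ=0}^{k} ((γτ−λτ)²/(Γτ ατ)) ‖gτ‖²` for every `k ≥ 0`. -/
theorem stmt5 {n : ℕ} (α Γ γ lam : ℕ → ℝ)
    (hα0 : α 0 = 1) (hα : ∀ k, 1 ≤ k → α k ∈ Set.Ioo (0 : ℝ) 1)
    (hΓ0 : Γ 0 = 1) (hΓ : ∀ k, 1 ≤ k → Γ k = (1 - α k) * Γ (k - 1))
    (g d : ℕ → EuclideanSpace ℝ (Fin n))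
    (hd : ∀ k, d (k + 1) = (1 - α k) • d k + (γ k - lam k) • g k) :
    ∀ k : ℕ,
      ‖d (k + 1)‖ ^ 2 ≤
        Γ k * ∑ τ ∈ Finset.range (k + 1), (γ τ - lam τ) ^ 2 / (Γ τ * α τ) * ‖g τ‖ ^ 2 := by
  have hΓpos : ∀ k, 0 < Γ k := by
    intro k
    induction k with
    | zero => rw [hΓ0]; norm_num
    | succ m ih =>
        rw [hΓ (m + 1) (by omega)]
        simp only [Nat.add_sub_cancel]
        have := hα (m + 1) (by omega)
        exact mul_pos (by linarith [this.2]) ih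
  intro k
  induction k with
  | zero =>
      have h1 : d 1 = (γ 0 - lam 0) • g 0 := by
        rw [hd 0, hα0]; simp
      rw [h1, norm_smul, Real.norm_eq_abs]
      rw [Finset.sum_range_one, hΓ0, hα0]
      rw [mul_pow]
      rw [sq_abs]
      ring_nf
      nlinarith [sq_nonneg ((γ 0 - lam 0) * ‖g 0‖)]
  | succ k ih =>
      have hak := hα (k + 1) (by omega)
      have hstep : ‖d (k + 2)‖ ^ 2 ≤ (1 - α (k + 1)) * ‖d (k + 1)‖ ^ 2 +
          (γ (k + 1) - lam (k + 1)) ^ 2 / α (k + 1) * ‖g (k + 1)‖ ^ 2 := by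
        rw [hd (k + 1)]
        exact conv_sq_bound _ _ hak.1 hak.2 _ _
      have hΓk1 : Γ (k + 1) = (1 - α (k + 1)) * Γ k := by
        rw [hΓ (k + 1) (by omega)]; simp
      have hsum : ∑ τ ∈ Finset.range (k + 2), (γ τ - lam τ) ^ 2 / (Γ τ * α τ) * ‖g τ‖ ^ 2 =
          (∑ τ ∈ Finset.range (k + 1), (γ τ - lam τ) ^ 2 / (Γ τ * α τ) * ‖g τ‖ ^ 2) +
          (γ (k + 1) - lam (k + 1)) ^ 2 / (Γ (k + 1) * α (k + 1)) * ‖g (k + 1)‖ ^ 2 :=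
        Finset.sum_range_succ _ _
      have hΓne : Γ (k + 1) ≠ 0 := ne_of_gt (hΓpos (k + 1))
      have hane : α (k + 1) ≠ 0 := ne_of_gt hak.1
      have hlast : Γ (k + 1) * ((γ (k + 1) - lam (k + 1)) ^ 2 / (Γ (k + 1) * α (k + 1)) *
          ‖g (k + 1)‖ ^ 2) = (γ (k + 1) - lam (k + 1)) ^ 2 / α (k + 1) * ‖g (k + 1)‖ ^ 2 := by
        field_simp
      have h1a : 0 ≤ 1 - α (k + 1) := by linarith [hak.2]
      calc ‖d (k + 1 + 1)‖ ^ 2 ≤ (1 - α (k + 1)) * ‖d (k + 1)‖ ^ 2 +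
            (γ (k + 1) - lam (k + 1)) ^ 2 / α (k + 1) * ‖g (k + 1)‖ ^ 2 := hstep
        _ ≤ (1 - α (k + 1)) * (Γ k * ∑ τ ∈ Finset.range (k + 1),
              (γ τ - lam τ) ^ 2 / (Γ τ * α τ) * ‖g τ‖ ^ 2) +
            (γ (k + 1) - lam (k + 1)) ^ 2 / α (k + 1) * ‖g (k + 1)‖ ^ 2 := by
            have := mul_le_mul_of_nonneg_left ih h1a
            linarith
        _ = Γ (k + 1) * ∑ τ ∈ Finset.range (k + 1 + 1),
              (γ τ - lam τ) ^ 2 / (Γ τ * α τ) * ‖g τ‖ ^ 2 := by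
            rw [hsum, mul_add, hlast, hΓk1]; ring
end

section
/- Let 𝓛 : ℝ^n × ℝ^m → ℝ be differentiable in its first argument with ‖∇_x 𝓛(x,y) − ∇_x 𝓛(x̄,y)‖ ≤ L_xx ‖x − x̄‖ for all x, x̄ ∈ ℝ^n and y ∈ ℝ^m. Fix α ∈ [0,1], γ > 0, x̃, x ∈ ℝ^n and y ∈ ℝ^m, and set z = (1−α)x̃ + αx and x⁺ = x − γ ∇_x 𝓛(z, y). Then 𝓛(x⁺, y) ≤ 𝓛(x, y) − γ(1 − L_xx γ)‖∇_x 𝓛(z, y)‖² + (L_xx (1−α)²/2)‖x̃ − x‖². -/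
open RealInnerProductSpace

variable {F : Type*} [NormedAddCommGroup F] [InnerProductSpace ℝ F] [CompleteSpace F]

lemma descent_lemma (f : F → ℝ) (g : F → F) (hg : ∀ u, HasGradientAt f (g u) u)
    (K : ℝ) (hK : 0 ≤ K) (hLip : ∀ u v, ‖g u - g v‖ ≤ K * ‖u - v‖) (a b : F) :
    f b ≤ f a + ⟪g a, b - a⟫ + K / 2 * ‖b - a‖ ^ 2 := by
  set v := b - a with hv
  set φ : ℝ → ℝ := fun t => f (a + t • v) - t * ⟪g a, v⟫ - K * t ^ 2 / 2 * ‖v‖ ^ 2 with hφ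
  have hpath : ∀ t : ℝ, HasDerivAt (fun t : ℝ => a + t • v) v t := by
    intro t
    simpa using ((hasDerivAt_id t).smul_const v).const_add a
  have hder : ∀ t : ℝ, HasDerivAt φ
      (⟪g (a + t • v), v⟫ - ⟪g a, v⟫ - K * t * ‖v‖ ^ 2) t := by
    intro t
    have h1 : HasDerivAt (fun t : ℝ => f (a + t • v)) ⟪g (a + t • v), v⟫ t := by
      have := ((hg (a + t • v)).hasFDerivAt.comp t (hpath t))
      simpa [InnerProductSpace.toDual_apply_apply, Function.comp_def] using this.hasDerivAt
    have h2 : HasDerivAt (fun t : ℝ => t * ⟪g a, v⟫) ⟪g a, v⟫ t := by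
      simpa using (hasDerivAt_id t).mul_const ⟪g a, v⟫
    have h3 : HasDerivAt (fun t : ℝ => K * t ^ 2 / 2 * ‖v‖ ^ 2) (K * t * ‖v‖ ^ 2) t := by
      have h : HasDerivAt (fun t : ℝ => t ^ 2) (2 * t) t := by
        simpa using hasDerivAt_pow 2 t
      have := ((h.const_mul K).div_const 2).mul_const (‖v‖ ^ 2)
      exact this.congr_deriv (by ring)
    exact (h1.sub h2).sub h3
  have hanti : AntitoneOn φ (Set.Icc 0 1) := by
    apply antitoneOn_of_deriv_nonpos (convex_Icc 0 1)
    · exact (Differentiable.continuous fun t => (hder t).differentiableAt).continuousOn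
    · exact fun t _ => (hder t).differentiableAt.differentiableWithinAt
    · intro t ht
      rw [interior_Icc] at ht
      rw [(hder t).deriv]
      have hcs : ⟪g (a + t • v) - g a, v⟫ ≤ ‖g (a + t • v) - g a‖ * ‖v‖ :=
        real_inner_le_norm _ _
      have hl : ‖g (a + t • v) - g a‖ ≤ K * (t * ‖v‖) := by
        have := hLip (a + t • v) a
        simpa [norm_smul, abs_of_pos ht.1] using this
      have hv0 : (0:ℝ) ≤ ‖v‖ := norm_nonneg _
      nlinarith [inner_sub_left (𝕜 := ℝ) (g (a + t • v)) (g a) v,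
        mul_le_mul_of_nonneg_right hl hv0]
  have key := hanti (Set.mem_Icc.2 ⟨le_refl 0, zero_le_one⟩)
    (Set.mem_Icc.2 ⟨zero_le_one, le_refl 1⟩) zero_le_one
  simp only [hφ, one_smul, zero_smul, add_zero] at key
  have : a + v = b := by rw [hv]; abel
  rw [this] at key
  nlinarith [key]


/-- One-step primal descent: with `z = (1−α)x̃ + αx` and `x⁺ = x − γ∇ₓ𝓛(z,y)`,
`𝓛(x⁺,y) ≤ 𝓛(x,y) − γ(1 − Lxx γ)‖∇ₓ𝓛(z,y)‖² + (Lxx(1−α)²/2)‖x̃ − x‖²`. -/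
theorem stmt7 {n m : ℕ}
    (L : EuclideanSpace ℝ (Fin n) → EuclideanSpace ℝ (Fin m) → ℝ)
    (gx : EuclideanSpace ℝ (Fin n) → EuclideanSpace ℝ (Fin m) → EuclideanSpace ℝ (Fin n))
    (hgx : ∀ x y, HasGradientAt (fun x' => L x' y) (gx x y) x)
    (Lxx : ℝ) (hLxx : 0 ≤ Lxx)
    (hLip : ∀ x xb y, ‖gx x y - gx xb y‖ ≤ Lxx * ‖x - xb‖)
    (α γ : ℝ) (hα : α ∈ Set.Icc (0 : ℝ) 1) (hγ : 0 < γ)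
    (xt x : EuclideanSpace ℝ (Fin n)) (y : EuclideanSpace ℝ (Fin m))
    (z xp : EuclideanSpace ℝ (Fin n))
    (hz : z = (1 - α) • xt + α • x)
    (hxp : xp = x - γ • gx z y) :
    L xp y ≤ L x y - γ * (1 - Lxx * γ) * ‖gx z y‖ ^ 2
      + Lxx * (1 - α) ^ 2 / 2 * ‖xt - x‖ ^ 2 := by
  set g := gx z y with hg
  have hd := descent_lemma (fun x' => L x' y) (fun u => gx u y) (fun u => hgx u y)
    Lxx hLxx (fun u v => hLip u v y) x xp
  have hxpx : xp - x = -(γ • g) := by rw [hxp]; abel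
  have hnxpx : ‖xp - x‖ = γ * ‖g‖ := by
    rw [hxpx, norm_neg, norm_smul, Real.norm_eq_abs, abs_of_pos hγ]
  have hin : ⟪gx x y, xp - x⟫ = -(γ * ⟪g, g⟫) - γ * ⟪gx x y - g, g⟫ := by
    rw [hxpx, inner_neg_right, real_inner_smul_right, inner_sub_left]
    ring
  have hcs : ⟪gx x y - g, g⟫ ≥ -(‖gx x y - g‖ * ‖g‖) := by
    have := abs_real_inner_le_norm (gx x y - g) g
    have := neg_abs_le ⟪gx x y - g, g⟫
    nlinarith [abs_real_inner_le_norm (gx x y - g) g, neg_abs_le ⟪gx x y - g, g⟫]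
  have hxz : ‖x - z‖ = (1 - α) * ‖xt - x‖ := by
    have : x - z = (1 - α) • (x - xt) := by
      rw [hz]; module
    rw [this, norm_smul, Real.norm_eq_abs, abs_of_nonneg (by linarith [hα.2]),
      ← norm_neg]
    congr 1
    abel
  have hl : ‖gx x y - g‖ ≤ Lxx * ((1 - α) * ‖xt - x‖) := by
    rw [hg, ← hxz]; exact hLip x z y
  have hgg : ⟪g, g⟫ = ‖g‖ ^ 2 := real_inner_self_eq_norm_sq g
  have hng : (0:ℝ) ≤ ‖g‖ := norm_nonneg _
  have hnd : (0:ℝ) ≤ ‖gx x y - g‖ := norm_nonneg _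
  have hnxt : (0:ℝ) ≤ ‖xt - x‖ := norm_nonneg _
  -- AM-GM:  γ * ‖gx x y - g‖ * ‖g‖ ≤ ‖gx x y - g‖^2/(2Lxx)... use directly:
  -- γ * d * ‖g‖ ≤ (d ≤ Lxx c) → γ Lxx c ‖g‖ ≤ Lxx/2 (c² + γ²‖g‖²)
  rw [hin, hnxpx, hgg] at hd
  have h1 : ‖gx x y - g‖ * (γ * ‖g‖) ≤ Lxx * ((1 - α) * ‖xt - x‖) * (γ * ‖g‖) :=
    mul_le_mul_of_nonneg_right hl (mul_nonneg hγ.le hng)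
  have h2 : (0:ℝ) ≤ Lxx * ((1 - α) * ‖xt - x‖ - γ * ‖g‖) ^ 2 :=
    mul_nonneg hLxx (sq_nonneg _)
  have h3 : -(γ * (‖gx x y - g‖ * ‖g‖)) ≤ γ * ⟪gx x y - g, g⟫ := by
    nlinarith [mul_le_mul_of_nonneg_left hcs hγ.le]
  nlinarith [hd, h1, h2, h3]
end

section
/- In addition to the hypotheses of the cumulative descent inequality for the PDM primal iterates (z_{k+1} = (1−α_k)x̃_k + α_k x_k, x_{k+1} = x_k − γ_k ∇_x 𝓛(z_{k+1}, y_{k+1}), x̃_{k+1} = z_{k+1} − λ_k ∇_x 𝓛(z_{k+1}, y_{k+1}), with α_0 = 1, α_k ∈ (0,1), Γ_0 = 1, Γ_k = (1−α_k)Γ_{k−1}, γ_k, λ_k > 0, ∇_x 𝓛 being L_xx-Lipschitz in x uniformly in y), assume that 𝓛 satisfies the one-sided PL condition with constant μ > 0, that for each y the infimum inf_{x'} 𝓛(x', y) is attained, and that γ_k C_k ≥ 0 for all k, where C_k := 1 − L_xx γ_k − (L_xx (γ_k−λ_k)²/(2 α_k Γ_k γ_k)) ∑_{τ=k}^{T−1}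 Γ_τ. Then ∑_{k=0}^{T−1} (𝓛(x_{k+1}, y_{k+1}) − 𝓛(x_k, y_{k+1})) ≤ − ∑_{k=0}^{T−1} γ_k C_k μ (𝓛(z_{k+1}, y_{k+1}) − inf_{x'} 𝓛(x', y_{k+1})) − ∑_{k=0}^{T−1} (γ_k C_k/2) ‖∇_x 𝓛(z_{k+1}, y_{k+1})‖². -/
open RealInnerProductSpace Finset intervalIntegral

lemma descent_aux {E : Type*} [NormedAddCommGroup E] [InnerProductSpace ℝ E] [CompleteSpace E]
    (f : E → ℝ) (g : E → E) (hg : ∀ p, HasGradientAt f (g p) p)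
    (Lc : ℝ) (hLc : 0 ≤ Lc) (hLip : ∀ a b, ‖g a - g b‖ ≤ Lc * ‖a - b‖)
    (v u : E) : f u ≤ f v + ⟪g v, u - v⟫ + Lc / 2 * ‖u - v‖ ^ 2 := by
  set c : ℝ → E := fun t => v + t • (u - v) with hc
  have hderiv : ∀ t : ℝ, HasDerivAt (fun s => f (c s)) ⟪g (c t), u - v⟫ t := by
    intro t
    have h1 : HasDerivAt c (u - v) t := by
      simpa [hc] using ((hasDerivAt_id t).smul_const (u - v)).const_add v
    have h2 := (hg (c t)).hasFDerivAt.comp_hasDerivAt t h1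
    simp [InnerProductSpace.toDual] at h2
    exact h2
  have hcont : Continuous fun t : ℝ => ⟪g (c t), u - v⟫ := by
    have hgc : Continuous fun t : ℝ => g (c t) := by
      apply (LipschitzWith.of_dist_le_mul (K := ⟨Lc * ‖u - v‖, by positivity⟩)
        (f := fun t : ℝ => g (c t)) ?_).continuous
      intro a b
      have := hLip (c a) (c b)
      have hcc : c a - c b = (a - b) • (u - v) := by
        simp only [hc]; rw [sub_smul]; abel
      rw [dist_eq_norm, Real.dist_eq]
      calc ‖g (c a) - g (c b)‖ ≤ Lc * ‖c a - c b‖ := this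
        _ = ↑(⟨Lc * ‖u - v‖, by positivity⟩ : NNReal) * |a - b| := by
            rw [hcc, norm_smul]; simp only [Real.norm_eq_abs, NNReal.coe_mk]; ring
        _ = _ := by rfl
    exact (hgc.inner continuous_const)
  set F : ℝ → ℝ := fun t => ⟪g v, u - v⟫ + Lc * t * ‖u - v‖ ^ 2 with hF
  have hFcont : Continuous F := by fun_prop
  have hint : f (c 1) - f (c 0) = ∫ t in (0:ℝ)..1, ⟪g (c t), u - v⟫ :=
    (integral_eq_sub_of_hasDerivAt (fun t _ => hderiv t)
      (hcont.intervalIntegrable 0 1)).symm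
  have hbound : ∫ t in (0:ℝ)..1, ⟪g (c t), u - v⟫ ≤ ∫ t in (0:ℝ)..1, F t := by
    apply integral_mono_on (by norm_num) (hcont.intervalIntegrable 0 1)
      (hFcont.intervalIntegrable 0 1)
    intro t ht
    rcases ht with ⟨ht0, ht1⟩
    have h1 : ⟪g (c t), u - v⟫ - ⟪g v, u - v⟫ = ⟪g (c t) - g v, u - v⟫ := by
      rw [inner_sub_left]
    have h2 : ⟪g (c t) - g v, u - v⟫ ≤ ‖g (c t) - g v‖ * ‖u - v‖ :=
      real_inner_le_norm _ _
    have h3 : ‖g (c t) - g v‖ ≤ Lc * (t * ‖u - v‖) := by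
      have := hLip (c t) v
      simpa [hc, norm_smul, Real.norm_eq_abs, abs_of_nonneg ht0, mul_assoc] using this
    have h4 : ‖g (c t) - g v‖ * ‖u - v‖ ≤ Lc * (t * ‖u - v‖) * ‖u - v‖ :=
      mul_le_mul_of_nonneg_right h3 (norm_nonneg _)
    simp only [hF]
    nlinarith [norm_nonneg (u - v)]
  have hval : ∫ t in (0:ℝ)..1, F t = ⟪g v, u - v⟫ + Lc / 2 * ‖u - v‖ ^ 2 := by
    simp only [hF]
    rw [intervalIntegral.integral_add intervalIntegrable_const
      (by apply Continuous.intervalIntegrable; fun_prop)]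
    simp only [intervalIntegral.integral_const]
    have h5 : ∫ t in (0:ℝ)..1, Lc * t * ‖u - v‖ ^ 2 = Lc / 2 * ‖u - v‖ ^ 2 := by
      have h6 : (fun t : ℝ => Lc * t * ‖u - v‖ ^ 2) = fun t : ℝ => (Lc * ‖u - v‖ ^ 2) * t := by
        funext t; ring
      rw [h6, intervalIntegral.integral_const_mul, integral_id]
      ring
    rw [h5]
    simp only [sub_zero, one_smul]
  have hc0 : c 0 = v := by simp [hc]
  have hc1 : c 1 = u := by simp [hc]
  have := hint.le.trans (hbound.trans hval.le)
  rw [hc0, hc1] at this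
  linarith

lemma arith1 (Lxx : ℝ) (hLxx : 0 ≤ Lxx) :
    ∀ (A B G e S I D γk : ℝ), 0 < γk → 0 ≤ G → 0 ≤ e → 0 ≤ D →
    A ≤ B + -γk * (G ^ 2 + I) + Lxx / 2 * (γk ^ 2 * G ^ 2) →
    -(D * G) ≤ I → D ≤ Lxx * e → e ^ 2 ≤ S →
    A - B ≤ -(γk * (1 - Lxx * γk)) * G ^ 2 + Lxx / 2 * S := by
  intro A B G e S I D γk h1 h3 h4 h5 h6 h7 h8 h9
  have q1 : -(γk * I) ≤ γk * (D * G) := by nlinarith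
  have q2 : γk * (D * G) ≤ γk * (Lxx * e * G) := by
    have : D * G ≤ Lxx * e * G := mul_le_mul_of_nonneg_right h8 h3
    nlinarith
  have q3 : γk * (Lxx * e * G) ≤ Lxx / 2 * e ^ 2 + Lxx / 2 * (γk ^ 2 * G ^ 2) := by
    nlinarith [mul_nonneg hLxx (sq_nonneg (e - γk * G))]
  have q4 : Lxx / 2 * e ^ 2 ≤ Lxx / 2 * S := by nlinarith
  nlinarith [q1, q2, q3, q4]

/-- Cumulative descent inequality for the PDM primal iterates under the one-sided PL
condition: `∑ (𝓛(x_{k+1},y_{k+1}) − 𝓛(x_k,y_{k+1})) ≤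
−∑ γₖCₖμ(𝓛(z_{k+1},y_{k+1}) − inf_{x'}𝓛(x',y_{k+1})) − ∑ (γₖCₖ/2)‖∇ₓ𝓛(z_{k+1},y_{k+1})‖²`. -/
theorem stmt9 {n m : ℕ}
    (L : EuclideanSpace ℝ (Fin n) → EuclideanSpace ℝ (Fin m) → ℝ)
    (gx : EuclideanSpace ℝ (Fin n) → EuclideanSpace ℝ (Fin m) → EuclideanSpace ℝ (Fin n))
    (hgx : ∀ x y, HasGradientAt (fun x' => L x' y) (gx x y) x)
    (Lxx : ℝ) (hLxx : 0 ≤ Lxx)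
    (hLip : ∀ x xb y, ‖gx x y - gx xb y‖ ≤ Lxx * ‖x - xb‖)
    (μ : ℝ) (hμ : 0 < μ)
    (hPL : ∀ x y, μ * (L x y - ⨅ x', L x' y) ≤ 1 / 2 * ‖gx x y‖ ^ 2)
    (hattain : ∀ y, ∃ xs, ∀ x', L xs y ≤ L x' y)
    (T : ℕ) (hT : 1 ≤ T)
    (α Γ γ lam : ℕ → ℝ)
    (hα0 : α 0 = 1) (hα : ∀ k, 1 ≤ k → k ≤ T - 1 → α k ∈ Set.Ioo (0 : ℝ) 1)
    (hΓ0 : Γ 0 = 1) (hΓ : ∀ k, 1 ≤ k → Γ k = (1 - α k) * Γ (k - 1))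
    (hγ : ∀ k, 0 < γ k) (hlam : ∀ k, 0 < lam k)
    (x xt z : ℕ → EuclideanSpace ℝ (Fin n)) (y : ℕ → EuclideanSpace ℝ (Fin m))
    (hinit : xt 0 = x 0)
    (hz : ∀ k < T, z (k + 1) = (1 - α k) • xt k + α k • x k)
    (hx : ∀ k < T, x (k + 1) = x k - γ k • gx (z (k + 1)) (y (k + 1)))
    (hxt : ∀ k < T, xt (k + 1) = z (k + 1) - lam k • gx (z (k + 1)) (y (k + 1)))
    (C : ℕ → ℝ)
    (hC : ∀ k, C k = 1 - Lxx * γ k -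
        Lxx * (γ k - lam k) ^ 2 / (2 * α k * Γ k * γ k) * ∑ τ ∈ Finset.Icc k (T - 1), Γ τ)
    (hCpos : ∀ k, 0 ≤ γ k * C k) :
    ∑ k ∈ Finset.range T, (L (x (k + 1)) (y (k + 1)) - L (x k) (y (k + 1))) ≤
      - ∑ k ∈ Finset.range T,
          γ k * C k * μ * (L (z (k + 1)) (y (k + 1)) - ⨅ x', L x' (y (k + 1)))
      - ∑ k ∈ Finset.range T, γ k * C k / 2 * ‖gx (z (k + 1)) (y (k + 1))‖ ^ 2 := by
  -- weights
  set W : ℕ → ℝ := fun τ => (lam τ - γ τ) ^ 2 / α τ * ‖gx (z (τ + 1)) (y (τ + 1))‖ ^ 2 with hW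
  -- positivity of Γ and α
  have hpos : ∀ k, k ≤ T - 1 → 0 < Γ k ∧ 0 < α k ∧ α k ≤ 1 := by
    intro k
    induction k with
    | zero => intro _; exact ⟨by rw [hΓ0]; norm_num, by rw [hα0]; norm_num, by rw [hα0]⟩
    | succ k ih =>
      intro hk
      obtain ⟨hΓk, _, _⟩ := ih (by omega)
      have hαk := hα (k + 1) (by omega) hk
      refine ⟨?_, hαk.1, le_of_lt hαk.2⟩
      rw [hΓ (k + 1) (by omega)]
      simp only [Nat.add_sub_cancel]
      have h1 : 0 < 1 - α (k + 1) := by linarith [hαk.2]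
      exact mul_pos h1 hΓk
  have hWnn : ∀ τ, τ ≤ T - 1 → 0 ≤ W τ := by
    intro τ hτ
    obtain ⟨_, hατ, _⟩ := hpos τ hτ
    simp only [hW]
    positivity
  -- convexity of the squared norm
  have hconv : ∀ (a b : EuclideanSpace ℝ (Fin n)) (t : ℝ), 0 ≤ t → t ≤ 1 →
      ‖(1 - t) • a + t • b‖ ^ 2 ≤ (1 - t) * ‖a‖ ^ 2 + t * ‖b‖ ^ 2 := by
    intro a b t ht0 ht1
    have h1 : 2 * ⟪a, b⟫ ≤ ‖a‖ ^ 2 + ‖b‖ ^ 2 := by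
      have h2 : ‖a - b‖ ^ 2 = ‖a‖ ^ 2 - 2 * ⟪a, b⟫ + ‖b‖ ^ 2 := norm_sub_sq_real a b
      nlinarith [sq_nonneg ‖a - b‖]
    have h3 : ‖(1 - t) • a + t • b‖ ^ 2
        = (1 - t) ^ 2 * ‖a‖ ^ 2 + 2 * ((1 - t) * t) * ⟪a, b⟫ + t ^ 2 * ‖b‖ ^ 2 := by
      rw [norm_add_sq_real]
      rw [norm_smul, norm_smul, real_inner_smul_left, real_inner_smul_right]
      simp only [Real.norm_eq_abs, abs_of_nonneg ht0,
        abs_of_nonneg (by linarith : (0:ℝ) ≤ 1 - t)]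
      ring
    nlinarith [mul_le_mul_of_nonneg_left h1 (mul_nonneg (by linarith : (0:ℝ) ≤ 1 - t) ht0)]
  -- reindexing helper
  have hsum : ∀ k, (1 - α k) * ∑ τ ∈ Finset.range k, Γ (k - 1) / Γ τ * W τ
      = ∑ τ ∈ Finset.range k, Γ k / Γ τ * W τ := by
    intro k
    rcases Nat.eq_zero_or_pos k with h | h
    · subst h; simp
    · rw [Finset.mul_sum]
      refine Finset.sum_congr rfl fun τ _ => ?_
      rw [hΓ k (by omega)]
      ring
  -- bound on ‖x k - xt k‖²
  have hd : ∀ k, k ≤ T → ‖x k - xt k‖ ^ 2 ≤ ∑ τ ∈ Finset.range k, Γ (k - 1) / Γ τ * W τ := by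
    intro k
    induction k with
    | zero => intro _; simp [hinit]
    | succ k ih =>
      intro hk
      have hkT : k < T := by omega
      obtain ⟨hΓk, hαk, hαk1⟩ := hpos k (by omega)
      have hrec : x (k + 1) - xt (k + 1)
          = (1 - α k) • (x k - xt k) + (lam k - γ k) • gx (z (k + 1)) (y (k + 1)) := by
        rw [hx k hkT, hxt k hkT]
        generalize gx (z (k + 1)) (y (k + 1)) = G
        rw [hz k hkT]
        module
      have hb : (lam k - γ k) • gx (z (k + 1)) (y (k + 1))
          = α k • (((α k)⁻¹ * (lam k - γ k)) • gx (z (k + 1)) (y (k + 1))) := by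
        rw [smul_smul]
        congr 1
        field_simp
      have hcv := hconv (x k - xt k) (((α k)⁻¹ * (lam k - γ k)) • gx (z (k + 1)) (y (k + 1)))
        (α k) (le_of_lt hαk) hαk1
      have hbn : ‖((α k)⁻¹ * (lam k - γ k)) • gx (z (k + 1)) (y (k + 1))‖ ^ 2
          = ((α k)⁻¹ * (lam k - γ k)) ^ 2 * ‖gx (z (k + 1)) (y (k + 1))‖ ^ 2 := by
        rw [norm_smul, Real.norm_eq_abs, mul_pow, sq_abs]
      have hαW : α k * (((α k)⁻¹ * (lam k - γ k)) ^ 2 * ‖gx (z (k + 1)) (y (k + 1))‖ ^ 2)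
          = W k := by
        simp only [hW]
        field_simp
      have hih : (1 - α k) * ‖x k - xt k‖ ^ 2
          ≤ ∑ τ ∈ Finset.range k, Γ k / Γ τ * W τ := by
        rw [← hsum k]
        exact mul_le_mul_of_nonneg_left (ih (by omega)) (by linarith)
      calc ‖x (k + 1) - xt (k + 1)‖ ^ 2
          = ‖(1 - α k) • (x k - xt k)
              + α k • (((α k)⁻¹ * (lam k - γ k)) • gx (z (k + 1)) (y (k + 1)))‖ ^ 2 := by
            rw [hrec, hb]
        _ ≤ (1 - α k) * ‖x k - xt k‖ ^ 2
              + α k * ‖((α k)⁻¹ * (lam k - γ k)) • gx (z (k + 1)) (y (k + 1))‖ ^ 2 := hcv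
        _ = (1 - α k) * ‖x k - xt k‖ ^ 2 + W k := by rw [hbn, hαW]
        _ ≤ (∑ τ ∈ Finset.range k, Γ k / Γ τ * W τ) + W k := by linarith
        _ = ∑ τ ∈ Finset.range (k + 1), Γ ((k + 1) - 1) / Γ τ * W τ := by
            rw [Finset.sum_range_succ]
            simp only [Nat.add_sub_cancel]
            rw [div_self (ne_of_gt hΓk), one_mul]
  -- per-step key inequality
  have hkey : ∀ k, k < T → L (x (k + 1)) (y (k + 1)) - L (x k) (y (k + 1)) ≤
      -(γ k * (1 - Lxx * γ k)) * ‖gx (z (k + 1)) (y (k + 1))‖ ^ 2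
      + Lxx / 2 * ∑ τ ∈ Finset.range k, Γ k / Γ τ * W τ := by
    intro k hkT
    obtain ⟨hΓk, hαk, hαk1⟩ := hpos k (by omega)
    have hdesc := descent_aux (fun x' => L x' (y (k + 1))) (fun x' => gx x' (y (k + 1)))
      (fun p => hgx p (y (k + 1))) Lxx hLxx (fun a b => hLip a b (y (k + 1))) (x k) (x (k + 1))
    have hxdiff : x (k + 1) - x k = -(γ k) • gx (z (k + 1)) (y (k + 1)) := by
      rw [hx k hkT]; module
    have hnormdiff : ‖x (k + 1) - x k‖ ^ 2 = γ k ^ 2 * ‖gx (z (k + 1)) (y (k + 1))‖ ^ 2 := by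
      rw [hxdiff, norm_smul, Real.norm_eq_abs, mul_pow, sq_abs]
      ring
    have hinner : ⟪gx (x k) (y (k + 1)), x (k + 1) - x k⟫
        = -(γ k) * ⟪gx (x k) (y (k + 1)), gx (z (k + 1)) (y (k + 1))⟫ := by
      rw [hxdiff, real_inner_smul_right]
    have hsplit : ⟪gx (x k) (y (k + 1)), gx (z (k + 1)) (y (k + 1))⟫
        = ‖gx (z (k + 1)) (y (k + 1))‖ ^ 2
          + ⟪gx (x k) (y (k + 1)) - gx (z (k + 1)) (y (k + 1)), gx (z (k + 1)) (y (k + 1))⟫ := by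
      rw [inner_sub_left, real_inner_self_eq_norm_sq]
      ring
    have hΔ : ‖gx (x k) (y (k + 1)) - gx (z (k + 1)) (y (k + 1))‖ ≤ Lxx * ‖x k - z (k + 1)‖ :=
      hLip (x k) (z (k + 1)) (y (k + 1))
    have hcs : |⟪gx (x k) (y (k + 1)) - gx (z (k + 1)) (y (k + 1)), gx (z (k + 1)) (y (k + 1))⟫|
        ≤ ‖gx (x k) (y (k + 1)) - gx (z (k + 1)) (y (k + 1))‖ * ‖gx (z (k + 1)) (y (k + 1))‖ :=
      abs_real_inner_le_norm _ _
    -- bound on ‖x k - z (k+1)‖²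
    have hez : ‖x k - z (k + 1)‖ ^ 2 ≤ ∑ τ ∈ Finset.range k, Γ k / Γ τ * W τ := by
      have h1 : x k - z (k + 1) = (1 - α k) • (x k - xt k) := by
        rw [hz k hkT]; module
      have h2 : ‖x k - z (k + 1)‖ ^ 2 = (1 - α k) ^ 2 * ‖x k - xt k‖ ^ 2 := by
        rw [h1, norm_smul, Real.norm_eq_abs, mul_pow, sq_abs]
      rw [h2, ← hsum k]
      have h3 : (1 - α k) ^ 2 * ‖x k - xt k‖ ^ 2 ≤ (1 - α k) * ‖x k - xt k‖ ^ 2 := by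
        have h0 : 0 ≤ 1 - α k := by linarith
        have h0' : (1 - α k) ^ 2 ≤ 1 - α k := by nlinarith
        exact mul_le_mul_of_nonneg_right h0' (sq_nonneg _)
      refine h3.trans ?_
      exact mul_le_mul_of_nonneg_left (hd k (le_of_lt hkT)) (by linarith)
    -- assemble
    rw [hinner, hsplit, hnormdiff] at hdesc
    exact arith1 Lxx hLxx _ _ _ _ _ _ _ _ (hγ k) (norm_nonneg _) (norm_nonneg _)
      (norm_nonneg _) hdesc (abs_le.mp hcs).1 hΔ hez
  -- swap the double sum
  have hswap : ∑ k ∈ Finset.range T, ∑ τ ∈ Finset.range k, Γ k / Γ τ * W τ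
      = ∑ τ ∈ Finset.range T, ∑ k ∈ Finset.Ico (τ + 1) T, Γ k / Γ τ * W τ := by
    have h := Finset.sum_Ico_Ico_comm' 0 T (fun τ k => Γ k / Γ τ * W τ)
    simp only [Finset.range_eq_Ico]
    exact h.symm
  -- bound the inner sums
  have hstep : ∀ τ ∈ Finset.range T, ∑ k ∈ Finset.Ico (τ + 1) T, Γ k / Γ τ * W τ
      ≤ (∑ j ∈ Finset.Icc τ (T - 1), Γ j) * (W τ / Γ τ) := by
    intro τ hτ
    have hτT : τ < T := Finset.mem_range.mp hτ
    obtain ⟨hΓτ, hατ, _⟩ := hpos τ (by omega)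
    have e1 : ∑ k ∈ Finset.Ico (τ + 1) T, Γ k / Γ τ * W τ
        = (∑ k ∈ Finset.Ico (τ + 1) T, Γ k) * (W τ / Γ τ) := by
      rw [Finset.sum_mul]
      refine Finset.sum_congr rfl fun k _ => ?_
      ring
    rw [e1]
    have e2 : (∑ k ∈ Finset.Ico (τ + 1) T, Γ k) ≤ ∑ j ∈ Finset.Icc τ (T - 1), Γ j := by
      apply Finset.sum_le_sum_of_subset_of_nonneg
      · intro k hk
        simp only [Finset.mem_Ico] at hk
        simp only [Finset.mem_Icc]
        omega
      · intro k hk _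
        simp only [Finset.mem_Icc] at hk
        exact (hpos k hk.2).1.le
    have e3 : 0 ≤ W τ / Γ τ := div_nonneg (hWnn τ (by omega)) hΓτ.le
    exact mul_le_mul_of_nonneg_right e2 e3
  -- combine
  have hmain : ∑ k ∈ Finset.range T, (L (x (k + 1)) (y (k + 1)) - L (x k) (y (k + 1)))
      ≤ ∑ k ∈ Finset.range T, -(γ k * C k) * ‖gx (z (k + 1)) (y (k + 1))‖ ^ 2 := by
    calc ∑ k ∈ Finset.range T, (L (x (k + 1)) (y (k + 1)) - L (x k) (y (k + 1)))
        ≤ ∑ k ∈ Finset.range T, (-(γ k * (1 - Lxx * γ k)) * ‖gx (z (k + 1)) (y (k + 1))‖ ^ 2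
            + Lxx / 2 * ∑ τ ∈ Finset.range k, Γ k / Γ τ * W τ) :=
          Finset.sum_le_sum fun k hk => hkey k (Finset.mem_range.mp hk)
      _ = (∑ k ∈ Finset.range T, -(γ k * (1 - Lxx * γ k)) * ‖gx (z (k + 1)) (y (k + 1))‖ ^ 2)
            + Lxx / 2 * ∑ k ∈ Finset.range T, ∑ τ ∈ Finset.range k, Γ k / Γ τ * W τ := by
          rw [Finset.sum_add_distrib, Finset.mul_sum]
      _ ≤ (∑ k ∈ Finset.range T, -(γ k * (1 - Lxx * γ k)) * ‖gx (z (k + 1)) (y (k + 1))‖ ^ 2)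
            + Lxx / 2 * ∑ τ ∈ Finset.range T, (∑ j ∈ Finset.Icc τ (T - 1), Γ j) * (W τ / Γ τ) := by
          have h4 := Finset.sum_le_sum hstep
          rw [hswap]
          have := mul_le_mul_of_nonneg_left h4 (by positivity : (0:ℝ) ≤ Lxx / 2)
          linarith
      _ = ∑ k ∈ Finset.range T, (-(γ k * (1 - Lxx * γ k)) * ‖gx (z (k + 1)) (y (k + 1))‖ ^ 2
            + Lxx / 2 * ((∑ j ∈ Finset.Icc k (T - 1), Γ j) * (W k / Γ k))) := by
          rw [Finset.sum_add_distrib, Finset.mul_sum]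
      _ = ∑ k ∈ Finset.range T, -(γ k * C k) * ‖gx (z (k + 1)) (y (k + 1))‖ ^ 2 := by
          refine Finset.sum_congr rfl fun k hk => ?_
          have hkT : k < T := Finset.mem_range.mp hk
          obtain ⟨hΓk, hαk, _⟩ := hpos k (by omega)
          have hγk := hγ k
          rw [hC k]
          simp only [hW]
          field_simp
          ring
  -- apply PL and conclude
  have hfinal : ∀ k ∈ Finset.range T,
      -(γ k * C k) * ‖gx (z (k + 1)) (y (k + 1))‖ ^ 2
      ≤ -(γ k * C k * μ * (L (z (k + 1)) (y (k + 1)) - ⨅ x', L x' (y (k + 1))))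
        - γ k * C k / 2 * ‖gx (z (k + 1)) (y (k + 1))‖ ^ 2 := by
    intro k _
    have h2 := mul_le_mul_of_nonneg_left (hPL (z (k + 1)) (y (k + 1))) (hCpos k)
    obtain ⟨P, hP⟩ : ∃ P, P = L (z (k + 1)) (y (k + 1)) - ⨅ x', L x' (y (k + 1)) := ⟨_, rfl⟩
    obtain ⟨Q, hQ⟩ : ∃ Q, Q = ‖gx (z (k + 1)) (y (k + 1))‖ ^ 2 := ⟨_, rfl⟩
    rw [← hP, ← hQ] at h2 ⊢
    clear * - h2
    nlinarith [h2]
  calc ∑ k ∈ Finset.range T, (L (x (k + 1)) (y (k + 1)) - L (x k) (y (k + 1)))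
      ≤ ∑ k ∈ Finset.range T, -(γ k * C k) * ‖gx (z (k + 1)) (y (k + 1))‖ ^ 2 := hmain
    _ ≤ ∑ k ∈ Finset.range T,
          (-(γ k * C k * μ * (L (z (k + 1)) (y (k + 1)) - ⨅ x', L x' (y (k + 1))))
            - γ k * C k / 2 * ‖gx (z (k + 1)) (y (k + 1))‖ ^ 2) :=
        Finset.sum_le_sum hfinal
    _ = _ := by
        rw [Finset.sum_sub_distrib]
        congr 1
        rw [← Finset.sum_neg_distrib]
end
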